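/- There exist a natural number T2 and a constant B2 > 0 such that for all integers t ≥ T2 one has V(t) ≤ B2 · t^{2H}. -/

import Mathlib

open Finset MeasureTheory ProbabilityTheory Set

set_option maxHeartbeats 1000000

lemma inner_reindex (r : ℤ → ℝ) (i : ℕ) :
    ∑ j ∈ Finset.Icc 1 (i - 1), r ((i : ℤ) - (j : ℤ)) =
    ∑ k ∈ Finset.Icc 1 (i - 1), r (k : ℤ) := by
  refine Finset.sum_nbij' (fun j => i - j) (fun k => i - k) ?_ ?_ ?_ ?_ ?_
  · intro j hj; simp only [Finset.mem_Icc] at hj ⊢; omega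
  · intro k hk; simp only [Finset.mem_Icc] at hk ⊢; omega
  · intro j hj; simp only [Finset.mem_Icc] at hj; show i - (i - j) = j; omega
  · intro k hk; simp only [Finset.mem_Icc] at hk; show i - (i - k) = k; omega
  · intro j hj
    simp only [Finset.mem_Icc] at hj
    show r ((i : ℤ) - (j : ℤ)) = r ((i - j : ℕ) : ℤ)
    congr 1
    omega

lemma swap_sum (f : ℕ → ℝ) (t : ℕ) :
    ∑ i ∈ Finset.Icc 2 t, ∑ k ∈ Finset.Icc 1 (i - 1), f k =
    ∑ k ∈ Finset.Icc 1 (t - 1), ((t : ℝ) - (k : ℝ)) * f k := by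
  induction t with
  | zero => simp
  | succ t ih =>
    rcases Nat.eq_zero_or_pos t with rfl | ht
    · simp
    rw [Finset.sum_Icc_succ_top (by omega : 2 ≤ t + 1), ih]
    have h1 : (t + 1) - 1 = t := by omega
    rw [h1]
    have hins : Finset.Icc 1 t = insert t (Finset.Icc 1 (t - 1)) := by
      have h2 : Finset.Icc 1 (t - 1) = Finset.Ico 1 t := by
        rw [← Finset.Ico_add_one_right_eq_Icc]; congr 1; omega
      rw [h2, Finset.Ico_insert_right ht]
    have hnm : t ∉ Finset.Icc 1 (t - 1) := by simp only [Finset.mem_Icc]; omega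
    have expand : ∀ k ∈ Finset.Icc 1 t, (((t+1:ℕ) : ℝ) - (k:ℝ)) * f k
        = ((t : ℝ) - k) * f k + f k := by intro k _; push_cast; ring
    rw [Finset.sum_congr rfl expand, Finset.sum_add_distrib, hins,
      Finset.sum_insert hnm, Finset.sum_insert hnm]
    ring

lemma partial_eq_tail (r : ℤ → ℝ) (hEven : ∀ t : ℤ, r (-t) = r t)
    (hAbsSum : Summable fun t : ℤ => |r t|) (hSumZero : ∑' t : ℤ, r t = 0)
    (t : ℕ) (ht : 1 ≤ t) :
    r 0 + 2 * ∑ k ∈ Finset.Icc 1 (t - 1), r (k : ℤ)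
      = -2 * ∑' n : ℕ, r ((n + t : ℕ) : ℤ) := by
  have hr : Summable r := hAbsSum.of_abs
  have hg : Summable (fun n : ℕ => r (n : ℤ)) :=
    hr.comp_injective Nat.cast_injective
  set a := ∑' n : ℕ, r (n : ℤ) with ha
  have h1 : HasSum (fun n : ℕ => r (n : ℤ)) a := hg.hasSum
  have h2 : HasSum (fun n : ℕ => r ((n + 1 : ℕ) : ℤ)) (a - r 0) := by
    refine (hasSum_nat_add_iff (f := fun n : ℕ => r (n : ℤ)) 1).mpr ?_
    simpa using h1
  have h3 : HasSum (fun n : ℕ => r (-((n : ℤ) + 1))) (a - r 0) := by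
    have heq : (fun n : ℕ => r (-((n : ℤ) + 1))) = fun n : ℕ => r ((n + 1 : ℕ) : ℤ) := by
      funext n; rw [hEven]; norm_cast
    rw [heq]; exact h2
  have h4 : HasSum r (a + (a - r 0)) := h1.of_nat_of_neg_add_one h3
  have h5 : 2 * a = r 0 := by
    have := h4.tsum_eq
    rw [hSumZero] at this
    linarith
  have h6 : ∑ i ∈ Finset.range (t - 1), r ((i + 1 : ℕ) : ℤ)
      + ∑' n : ℕ, r ((n + (t - 1) + 1 : ℕ) : ℤ) = a - r 0 := by
    rw [← h2.tsum_eq]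
    exact h2.summable.sum_add_tsum_nat_add (t - 1)
  have h7 : ∑ k ∈ Finset.Icc 1 (t - 1), r (k : ℤ)
      = ∑ i ∈ Finset.range (t - 1), r ((i + 1 : ℕ) : ℤ) := by
    have : Finset.Icc 1 (t - 1) = Finset.Ico 1 t := by
      rw [← Finset.Ico_add_one_right_eq_Icc]; congr 1; omega
    rw [this, Finset.sum_Ico_eq_sum_range]
    refine Finset.sum_congr (by congr 1) fun i _ => by rw [add_comm]
  have h8 : ∑' n : ℕ, r ((n + (t - 1) + 1 : ℕ) : ℤ) = ∑' n : ℕ, r ((n + t : ℕ) : ℤ) := by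
    refine tsum_congr fun n => ?_
    congr 2
    omega
  rw [h7]
  rw [h8] at h6
  linarith [h6]

lemma rpow_anti {χ : ℝ} (hχ : χ ≤ 0) {s : Set ℝ} (hs : s ⊆ Set.Ioi (0:ℝ)) :
    AntitoneOn (fun x : ℝ => x ^ χ) s := by
  intro x hx y hy hxy
  exact Real.rpow_le_rpow_of_nonpos (hs hx) hxy hχ

lemma tail_rpow_sum_le {χ : ℝ} (hχ : χ < -1) (t : ℕ) (ht : 2 ≤ t) :
    ∑' n : ℕ, ((n + t : ℕ) : ℝ) ^ χ ≤ ((t : ℝ) - 1) ^ (χ + 1) / (-(χ + 1)) := by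
  set c : ℝ := (t : ℝ) - 1 with hc
  have hc1 : (1 : ℝ) ≤ c := by
    have : (2 : ℝ) ≤ (t : ℝ) := by exact_mod_cast ht
    simp only [hc]; linarith
  have hc0 : (0 : ℝ) < c := lt_of_lt_of_le one_pos hc1
  have hsum : Summable (fun n : ℕ => ((n + t : ℕ) : ℝ) ^ χ) := by
    have hbase : Summable (fun m : ℕ => (m : ℝ) ^ χ) := Real.summable_nat_rpow.2 hχ
    exact hbase.comp_injective (add_left_injective t)
  refine Summable.tsum_le_of_sum_le hsum fun u => ?_
  obtain ⟨N, hN⟩ := u.exists_nat_subset_range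
  have h1 : ∑ n ∈ u, ((n + t : ℕ) : ℝ) ^ χ ≤ ∑ n ∈ Finset.range N, ((n + t : ℕ) : ℝ) ^ χ :=
    Finset.sum_le_sum_of_subset_of_nonneg hN fun i _ _ =>
      Real.rpow_nonneg (by positivity) χ
  have h2 : ∑ n ∈ Finset.range N, ((n + t : ℕ) : ℝ) ^ χ
      = ∑ i ∈ Finset.range N, (fun x : ℝ => x ^ χ) (c + (i + 1 : ℕ)) := by
    refine Finset.sum_congr rfl fun i _ => ?_
    simp only [hc]
    push_cast
    ring_nf
  have h3 : ∑ i ∈ Finset.range N, (fun x : ℝ => x ^ χ) (c + (i + 1 : ℕ))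
      ≤ ∫ x in c..c + N, x ^ χ := by
    refine AntitoneOn.sum_le_integral (f := fun x : ℝ => x ^ χ) (x₀ := c) (a := N) ?_
    refine rpow_anti (by linarith) ?_
    intro x hx
    exact lt_of_lt_of_le hc0 hx.1
  have h4 : ∫ x in c..c + N, x ^ χ ≤ ∫ x in Set.Ioi c, x ^ χ := by
    rw [intervalIntegral.integral_of_le (le_add_of_nonneg_right (Nat.cast_nonneg N))]
    refine setIntegral_mono_set (integrableOn_Ioi_rpow_of_lt hχ hc0) ?_ ?_
    · filter_upwards [ae_restrict_mem measurableSet_Ioi] with x hx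
      exact Real.rpow_nonneg (le_of_lt (lt_trans hc0 hx)) χ
    · exact Filter.Eventually.of_forall Set.Ioc_subset_Ioi_self
  have h5 : ∫ x in Set.Ioi c, x ^ χ = c ^ (χ + 1) / (-(χ + 1)) := by
    rw [integral_Ioi_rpow_of_lt hχ hc0, div_neg, neg_div]
  calc ∑ n ∈ u, ((n + t : ℕ) : ℝ) ^ χ ≤ _ := h1
    _ = _ := h2
    _ ≤ _ := h3
    _ ≤ _ := h4
    _ = _ := h5

lemma mid_rpow_sum_le {q : ℝ} (hq1 : -1 < q) (hq0 : q < 0) (m t : ℕ) (hm : 2 ≤ m)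
    (hmt : m ≤ t) :
    ∑ k ∈ Finset.Icc m (t - 1), (k : ℝ) ^ q ≤ (t : ℝ) ^ (q + 1) / (q + 1) := by
  set x₀ : ℝ := (m : ℝ) - 1 with hx₀
  have hx1 : (1 : ℝ) ≤ x₀ := by
    have : (2 : ℝ) ≤ (m : ℝ) := by exact_mod_cast hm
    simp only [hx₀]; linarith
  have hx0 : (0 : ℝ) < x₀ := lt_of_lt_of_le one_pos hx1
  have h2 : ∑ k ∈ Finset.Icc m (t - 1), (k : ℝ) ^ q
      = ∑ i ∈ Finset.range (t - m), (fun x : ℝ => x ^ q) (x₀ + (i + 1 : ℕ)) := by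
    have hIcc : Finset.Icc m (t - 1) = Finset.Ico m t := by
      rw [← Finset.Ico_add_one_right_eq_Icc]; congr 1; omega
    rw [hIcc, Finset.sum_Ico_eq_sum_range]
    refine Finset.sum_congr rfl fun i _ => ?_
    simp only [hx₀]
    push_cast
    ring_nf
  have h3 : ∑ i ∈ Finset.range (t - m), (fun x : ℝ => x ^ q) (x₀ + (i + 1 : ℕ))
      ≤ ∫ x in x₀..x₀ + (t - m : ℕ), x ^ q := by
    refine AntitoneOn.sum_le_integral (f := fun x : ℝ => x ^ q) (x₀ := x₀) (a := t - m) ?_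
    refine rpow_anti (le_of_lt hq0) ?_
    intro x hx
    exact lt_of_lt_of_le hx0 hx.1
  have h4 : ∫ x in x₀..x₀ + (t - m : ℕ), x ^ q
      = ((x₀ + (t - m : ℕ)) ^ (q + 1) - x₀ ^ (q + 1)) / (q + 1) :=
    integral_rpow (Or.inl hq1)
  have h5 : ((x₀ + (t - m : ℕ)) ^ (q + 1) - x₀ ^ (q + 1)) / (q + 1)
      ≤ (t : ℝ) ^ (q + 1) / (q + 1) := by
    have hq1' : (0 : ℝ) < q + 1 := by linarith
    have hle : x₀ + ((t - m : ℕ) : ℝ) ≤ (t : ℝ) := by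
      have : ((t - m : ℕ) : ℝ) = (t : ℝ) - (m : ℝ) := by
        push_cast [Nat.cast_sub hmt]; ring
      simp only [hx₀, this]; linarith
    have h6 : (x₀ + (t - m : ℕ)) ^ (q + 1) ≤ (t : ℝ) ^ (q + 1) :=
      Real.rpow_le_rpow (by positivity) hle (le_of_lt hq1')
    have h7 : (0 : ℝ) ≤ x₀ ^ (q + 1) := Real.rpow_nonneg (le_of_lt hx0) _
    gcongr
    linarith
  calc ∑ k ∈ Finset.Icc m (t - 1), (k : ℝ) ^ q = _ := h2
    _ ≤ _ := h3
    _ = _ := h4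
    _ ≤ _ := h5

/-- `V r t` is the variance of `S_t = Z_1 + … + Z_t` for a centered stationary sequence
with covariance function `r`. -/
noncomputable def V (r : ℤ → ℝ) (t : ℕ) : ℝ :=
  (t : ℝ) * r 0 + 2 * ∑ i ∈ Finset.Icc 2 t, ∑ j ∈ Finset.Icc 1 (i - 1), r ((i : ℤ) - (j : ℤ))

theorem variance_upper_bound
    (r : ℤ → ℝ) (hEven : ∀ t : ℤ, r (-t) = r t)
    (hAbsSum : Summable fun t : ℤ => |r t|)
    (hSumZero : ∑' t : ℤ, r t = 0)
    (T0 : ℕ) (hT0 : 2 ≤ T0)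
    (J1 J2 χ : ℝ) (hJ12 : J1 ≤ J2) (hJ2 : J2 < 0)
    (hχ : χ ∈ Set.Ioo (-2 : ℝ) (-1))
    (hbound : ∀ t : ℤ, (T0 : ℤ) ≤ t →
      J1 * (t : ℝ) ^ χ ≤ r t ∧ r t ≤ J2 * (t : ℝ) ^ χ)
    (H : ℝ) (hH : H = χ / 2 + 1) :
    ∃ (T2 : ℕ) (B2 : ℝ), 0 < B2 ∧
      ∀ t : ℕ, T2 ≤ t → V r t ≤ B2 * (t : ℝ) ^ (2 * H) := by
  obtain ⟨hχ2, hχ1⟩ := hχ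
  have hJ1 : J1 < 0 := lt_of_le_of_lt hJ12 hJ2
  have h2H : 2 * H = χ + 2 := by rw [hH]; ring
  -- |r k| ≤ -J1 * k^χ for k ≥ T0
  have habs : ∀ k : ℕ, T0 ≤ k → |r (k : ℤ)| ≤ (-J1) * (k : ℝ) ^ χ := by
    intro k hk
    have hk2 : 0 < k := by omega
    have hk0 : (0 : ℝ) < (k : ℝ) := by exact_mod_cast hk2
    obtain ⟨hb1, hb2⟩ := hbound (k : ℤ) (by exact_mod_cast hk)
    have hkχ : (0 : ℝ) < (k : ℝ) ^ χ := Real.rpow_pos_of_pos hk0 χ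
    have hrneg : r (k : ℤ) ≤ 0 := by
      refine hb2.trans ?_
      push_cast
      nlinarith
    rw [abs_of_nonpos hrneg]
    push_cast at hb1
    linarith
  -- constants
  set K1 : ℝ := (1 / (2 : ℝ) ^ (χ + 1)) / (-(χ + 1)) with hK1
  have hK1pos : 0 < K1 := by
    have : (0 : ℝ) < (2 : ℝ) ^ (χ + 1) := Real.rpow_pos_of_pos two_pos _
    have : (0 : ℝ) < -(χ + 1) := by linarith
    positivity
  set C3 : ℝ := ∑ k ∈ Finset.Icc 1 (T0 - 1), (k : ℝ) * |r (k : ℤ)| with hC3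
  have hC3nonneg : 0 ≤ C3 := Finset.sum_nonneg fun k _ => by positivity
  set B2 : ℝ := 2 * (-J1) * K1 + 2 * (-J1) / (χ + 2) + 2 * C3 + 1 with hB2
  have hχ2' : (0 : ℝ) < χ + 2 := by linarith
  have hB2pos : 0 < B2 := by
    have h1 : 0 < -J1 := by linarith
    have h2 : 0 < 2 * (-J1) / (χ + 2) := by positivity
    have h3 : 0 < 2 * (-J1) * K1 := by positivity
    simp only [hB2]; linarith
  refine ⟨T0 + 1, B2, hB2pos, fun t ht => ?_⟩
  have ht1 : 1 ≤ t := by omega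
  have ht2 : 2 ≤ t := by omega
  have htT0 : T0 ≤ t - 1 := by omega
  have ht0 : (0 : ℝ) < (t : ℝ) := by positivity
  have htR : (2 : ℝ) ≤ (t : ℝ) := by exact_mod_cast ht2
  -- Step A: rewrite V
  set g : ℕ → ℝ := fun k => r (k : ℤ) with hg
  set P : ℝ := ∑ k ∈ Finset.Icc 1 (t - 1), g k with hP
  set D : ℝ := ∑ k ∈ Finset.Icc 1 (t - 1), (k : ℝ) * g k with hD
  set tail : ℝ := ∑' n : ℕ, r ((n + t : ℕ) : ℤ) with htail
  have hVeq : V r t = (t : ℝ) * (r 0 + 2 * P) - 2 * D := by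
    unfold V
    rw [Finset.sum_congr rfl fun i _ => inner_reindex r i, swap_sum g t]
    have : ∑ k ∈ Finset.Icc 1 (t - 1), ((t : ℝ) - (k : ℝ)) * g k
        = (t : ℝ) * P - D := by
      rw [hP, hD, Finset.mul_sum, ← Finset.sum_sub_distrib]
      exact Finset.sum_congr rfl fun k _ => by ring
    rw [this]; ring
  have hP2 : r 0 + 2 * P = -2 * tail :=
    partial_eq_tail r hEven hAbsSum hSumZero t ht1
  -- Step C: bound on tail
  have hinj : Function.Injective (fun n : ℕ => ((n + t : ℕ) : ℤ)) := by
    intro a b h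
    simp only [Int.natCast_inj] at h
    omega
  have habs_t : Summable fun n : ℕ => |r ((n + t : ℕ) : ℤ)| :=
    hAbsSum.comp_injective hinj
  have hmaj : Summable fun n : ℕ => (-J1) * ((n + t : ℕ) : ℝ) ^ χ := by
    have hbase : Summable (fun m : ℕ => (m : ℝ) ^ χ) := Real.summable_nat_rpow.2 hχ1
    exact (hbase.comp_injective (add_left_injective t)).mul_left _
  have htail_abs : |tail| ≤ (-J1) * (K1 * (t : ℝ) ^ (χ + 1)) := by
    have s1 : |tail| ≤ ∑' n : ℕ, |r ((n + t : ℕ) : ℤ)| := by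
      have h0 := norm_tsum_le_tsum_norm (f := fun n : ℕ => r ((n + t : ℕ) : ℤ))
        (by simpa only [Real.norm_eq_abs] using habs_t)
      simpa only [Real.norm_eq_abs] using h0
    have s2 : ∑' n : ℕ, |r ((n + t : ℕ) : ℤ)|
        ≤ ∑' n : ℕ, (-J1) * ((n + t : ℕ) : ℝ) ^ χ := by
      refine habs_t.tsum_le_tsum (fun n => habs (n + t) (by omega)) hmaj
    have s3 : ∑' n : ℕ, (-J1) * ((n + t : ℕ) : ℝ) ^ χ
        = (-J1) * ∑' n : ℕ, ((n + t : ℕ) : ℝ) ^ χ := tsum_mul_left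
    have s4 : ∑' n : ℕ, ((n + t : ℕ) : ℝ) ^ χ ≤ K1 * (t : ℝ) ^ (χ + 1) := by
      refine (tail_rpow_sum_le hχ1 t ht2).trans ?_
      have h5 : ((t : ℝ) - 1) ^ (χ + 1) ≤ ((t : ℝ) / 2) ^ (χ + 1) := by
        refine Real.rpow_le_rpow_of_nonpos (by linarith) (by linarith) (by linarith)
      have h6 : ((t : ℝ) / 2) ^ (χ + 1) = (t : ℝ) ^ (χ + 1) / (2 : ℝ) ^ (χ + 1) :=
        Real.div_rpow (le_of_lt ht0) (by norm_num) _
      have h7 : (0 : ℝ) < -(χ + 1) := by linarith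
      have h9 : ((t : ℝ) - 1) ^ (χ + 1) / (-(χ + 1))
          ≤ ((t : ℝ) / 2) ^ (χ + 1) / (-(χ + 1)) := by gcongr
      refine h9.trans ?_
      rw [h6, hK1]
      exact le_of_eq (by ring)
    have hJ1' : (0 : ℝ) ≤ -J1 := by linarith
    calc |tail| ≤ _ := s1
      _ ≤ _ := s2
      _ = _ := s3
      _ ≤ (-J1) * (K1 * (t : ℝ) ^ (χ + 1)) := by
          exact mul_le_mul_of_nonneg_left s4 hJ1'
  -- Step D: bound on D
  have hmid : ∑ k ∈ Finset.Icc T0 (t - 1), (k : ℝ) * |r (k : ℤ)|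
      ≤ (-J1) * ((t : ℝ) ^ (χ + 2) / (χ + 2)) := by
    have step1 : ∀ k ∈ Finset.Icc T0 (t - 1),
        (k : ℝ) * |r (k : ℤ)| ≤ (-J1) * (k : ℝ) ^ (χ + 1) := by
      intro k hk
      simp only [Finset.mem_Icc] at hk
      have hkpos : 0 < k := by omega
      have hk0 : (0 : ℝ) < (k : ℝ) := by exact_mod_cast hkpos
      have hab := habs k hk.1
      have hpow : (k : ℝ) ^ (χ + 1) = (k : ℝ) ^ χ * (k : ℝ) :=
        Real.rpow_add_one (ne_of_gt hk0) χ
      calc (k : ℝ) * |r (k : ℤ)| ≤ (k : ℝ) * ((-J1) * (k : ℝ) ^ χ) :=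
            mul_le_mul_of_nonneg_left hab (le_of_lt hk0)
        _ = (-J1) * (k : ℝ) ^ (χ + 1) := by rw [hpow]; ring
    calc ∑ k ∈ Finset.Icc T0 (t - 1), (k : ℝ) * |r (k : ℤ)|
        ≤ ∑ k ∈ Finset.Icc T0 (t - 1), (-J1) * (k : ℝ) ^ (χ + 1) :=
          Finset.sum_le_sum step1
      _ = (-J1) * ∑ k ∈ Finset.Icc T0 (t - 1), (k : ℝ) ^ (χ + 1) := by
          rw [Finset.mul_sum]
      _ ≤ (-J1) * ((t : ℝ) ^ (χ + 1 + 1) / (χ + 1 + 1)) :=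
          mul_le_mul_of_nonneg_left
            (mid_rpow_sum_le (by linarith) (by linarith) T0 t hT0 (by omega))
            (by linarith)
      _ = (-J1) * ((t : ℝ) ^ (χ + 2) / (χ + 2)) := by
          rw [show χ + 1 + 1 = χ + 2 by ring]
  have hDsplit : ∑ k ∈ Finset.Icc 1 (t - 1), (k : ℝ) * |r (k : ℤ)|
      = C3 + ∑ k ∈ Finset.Icc T0 (t - 1), (k : ℝ) * |r (k : ℤ)| := by
    have e1 : Finset.Icc 1 (t - 1) = Finset.Ioc 0 (t - 1) := by
      rw [← Finset.Icc_add_one_left_eq_Ioc]; rfl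
    have e2 : Finset.Icc 1 (T0 - 1) = Finset.Ioc 0 (T0 - 1) := by
      rw [← Finset.Icc_add_one_left_eq_Ioc]; rfl
    have e3 : Finset.Icc T0 (t - 1) = Finset.Ioc (T0 - 1) (t - 1) := by
      rw [← Finset.Icc_add_one_left_eq_Ioc]; congr 1; omega
    rw [hC3, e1, e2, e3]
    exact (Finset.sum_Ioc_consecutive _ (by omega : 0 ≤ T0 - 1)
      (by omega : T0 - 1 ≤ t - 1)).symm
  have hDabs : |D| ≤ C3 + (-J1) * ((t : ℝ) ^ (χ + 2) / (χ + 2)) := by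
    have habsle : |D| ≤ ∑ k ∈ Finset.Icc 1 (t - 1), (k : ℝ) * |r (k : ℤ)| := by
      rw [hD]
      refine (Finset.abs_sum_le_sum_abs _ _).trans ?_
      refine le_of_eq (Finset.sum_congr rfl fun k _ => ?_)
      simp only [hg]
      rw [abs_mul, abs_of_nonneg (Nat.cast_nonneg k : (0:ℝ) ≤ (k:ℝ))]
    rw [hDsplit] at habsle
    linarith [hmid]
  -- combine
  clear_value g P D tail K1 C3 B2
  have hpow1 : 1 ≤ (t : ℝ) ^ (χ + 2) := by
    have h0 := Real.rpow_le_rpow_of_exponent_le (show (1:ℝ) ≤ (t:ℝ) by linarith)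
      (show (0:ℝ) ≤ χ + 2 by linarith)
    rwa [Real.rpow_zero] at h0
  have hmul : (t : ℝ) * (t : ℝ) ^ (χ + 1) = (t : ℝ) ^ (χ + 2) := by
    have h0 := Real.rpow_add_one (ne_of_gt ht0) (χ + 1)
    rw [show χ + 1 + 1 = χ + 2 by ring] at h0
    rw [h0]; ring
  have hVle : V r t ≤ 2 * (t : ℝ) * |tail| + 2 * |D| := by
    rw [hVeq, hP2]
    have h1 : (t : ℝ) * (-2 * tail) ≤ 2 * (t : ℝ) * |tail| := by
      nlinarith [neg_abs_le tail, abs_nonneg tail, ht0]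
    have h2 : -(2 * D) ≤ 2 * |D| := by nlinarith [neg_abs_le D]
    linarith
  have e1 : 2 * (t : ℝ) * |tail| ≤ 2 * (-J1) * K1 * (t : ℝ) ^ (χ + 2) := by
    calc 2 * (t : ℝ) * |tail| ≤ 2 * (t : ℝ) * ((-J1) * (K1 * (t : ℝ) ^ (χ + 1))) := by
          nlinarith [htail_abs, ht0]
      _ = 2 * (-J1) * K1 * ((t : ℝ) * (t : ℝ) ^ (χ + 1)) := by ring
      _ = 2 * (-J1) * K1 * (t : ℝ) ^ (χ + 2) := by rw [hmul]
  have hfin : V r t ≤ B2 * (t : ℝ) ^ (χ + 2) := by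
    rw [hB2]
    have e2 : 2 * |D| ≤ 2 * C3 + 2 * (-J1) / (χ + 2) * (t : ℝ) ^ (χ + 2) := by
      have h3 : 2 * ((-J1) * ((t : ℝ) ^ (χ + 2) / (χ + 2)))
          = 2 * (-J1) / (χ + 2) * (t : ℝ) ^ (χ + 2) := by ring
      linarith [hDabs]
    nlinarith [hpow1, hC3nonneg]
  rw [h2H]
  exact hfin
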